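/- Let L ≥ 1 and let Z₁,…,Z_L be independent real random variables on a probability space, where Z_k is exponentially distributed with mean m_k > 0 and the means m₁,…,m_L are pairwise distinct. Then the expectation of the sum satisfies E[Z₁ + ⋯ + Z_L] = Σ_{k=1}^{L} ( ∏_{j≠k} m_k/(m_k − m_j) ) · m_k. -/

import Mathlib

open MeasureTheory ProbabilityTheory Finset
open scoped ProbabilityTheory

section Aux

open Real Set
open scoped ENNReal NNReal

lemma exp_indicator_eq {r : ℝ} (hr : 0 < r) :
    (fun x : ℝ => ((ProbabilityTheory.exponentialPDFReal r x).toNNReal : ℝ≥0) • x)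
      = Set.indicator (Set.Ioi (0 : ℝ)) (fun x => r * Real.exp (-(r * x)) * x) := by
  funext x
  have hpdf : ProbabilityTheory.exponentialPDFReal r x
      = if 0 ≤ x then r * Real.exp (-(r * x)) else 0 := by
    rw [ProbabilityTheory.exponentialPDFReal, ProbabilityTheory.gammaPDFReal]
    simp [Real.Gamma_one]
  by_cases hx : 0 < x
  · rw [Set.indicator_of_mem (Set.mem_Ioi.mpr hx)]
    rw [hpdf, if_pos hx.le]
    have hnn : 0 ≤ r * Real.exp (-(r * x)) := by positivity
    simp [NNReal.smul_def, Real.coe_toNNReal _ hnn]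
  · rw [Set.indicator_of_notMem (by simpa using hx)]
    rcases lt_or_eq_of_le (not_lt.mp hx) with h | h
    · rw [hpdf, if_neg (not_le.mpr h)]; simp
    · simp [h]

lemma exp_inner_integrableOn {r : ℝ} (hr : 0 < r) :
    IntegrableOn (fun x : ℝ => r * Real.exp (-(r * x)) * x) (Set.Ioi (0 : ℝ)) := by
  have h := integrableOn_rpow_mul_exp_neg_mul_rpow
    (by norm_num : (-1 : ℝ) < 1) (by norm_num : (0 : ℝ) < 1) hr
  have h' : IntegrableOn (fun x : ℝ => x * Real.exp (-(r * x))) (Set.Ioi (0 : ℝ)) := by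
    refine IntegrableOn.congr_fun h (fun x hx => ?_) measurableSet_Ioi
    rw [Real.rpow_one]
    ring_nf
  have h2 : IntegrableOn (fun x : ℝ => r * (x * Real.exp (-(r * x)))) (Set.Ioi (0 : ℝ)) :=
    h'.const_mul r
  refine IntegrableOn.congr_fun h2 (fun x hx => ?_) measurableSet_Ioi
  ring

lemma expMeasure_eq_withDensity (r : ℝ) :
    ProbabilityTheory.expMeasure r
      = volume.withDensity
          (fun x => ((ProbabilityTheory.exponentialPDFReal r x).toNNReal : ℝ≥0∞)) := by
  rw [ProbabilityTheory.expMeasure, ProbabilityTheory.gammaMeasure]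
  rfl

lemma exp_integrable {r : ℝ} (hr : 0 < r) :
    Integrable (fun x : ℝ => x) (ProbabilityTheory.expMeasure r) := by
  have hmeas : Measurable fun x : ℝ => (ProbabilityTheory.exponentialPDFReal r x).toNNReal :=
    (ProbabilityTheory.measurable_exponentialPDFReal r).real_toNNReal
  rw [expMeasure_eq_withDensity r, integrable_withDensity_iff_integrable_smul hmeas,
    exp_indicator_eq hr, integrable_indicator_iff measurableSet_Ioi]
  exact exp_inner_integrableOn hr

lemma exp_mean {r : ℝ} (hr : 0 < r) :
    ∫ x, x ∂(ProbabilityTheory.expMeasure r) = r⁻¹ := by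
  have hmeas : Measurable fun x : ℝ => (ProbabilityTheory.exponentialPDFReal r x).toNNReal :=
    (ProbabilityTheory.measurable_exponentialPDFReal r).real_toNNReal
  rw [expMeasure_eq_withDensity r, integral_withDensity_eq_integral_smul hmeas]
  calc ∫ x : ℝ, (ProbabilityTheory.exponentialPDFReal r x).toNNReal • x
      = ∫ x : ℝ, Set.indicator (Set.Ioi (0:ℝ)) (fun x => r * Real.exp (-(r * x)) * x) x := by
        rw [exp_indicator_eq hr]
    _ = ∫ x in Set.Ioi (0:ℝ), r * Real.exp (-(r * x)) * x := by
        rw [integral_indicator measurableSet_Ioi]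
    _ = r * ∫ x in Set.Ioi (0:ℝ), x ^ ((2:ℝ) - 1) * Real.exp (-(r * x)) := by
        rw [← integral_const_mul]
        refine setIntegral_congr_fun measurableSet_Ioi (fun x hx => ?_)
        rw [show (2:ℝ) - 1 = 1 by norm_num, Real.rpow_one]
        ring
    _ = r * ((1 / r) ^ (2:ℝ) * Real.Gamma 2) := by
        rw [Real.integral_rpow_mul_exp_neg_mul_Ioi (by norm_num : (0:ℝ) < 2) hr]
    _ = r⁻¹ := by
        rw [Real.Gamma_two, show (2:ℝ) = ((2:ℕ):ℝ) by norm_num, Real.rpow_natCast]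
        field_simp

/-- The coefficient identity: for injective `m`,
`∑ k, m k ^ L * ∏_{j≠k} (m k - m j)⁻¹ = ∑ k, m k`. -/
lemma sum_pow_mul_nodalWeight {L : ℕ} (hL : 1 ≤ L) (m : Fin L → ℝ)
    (hdist : Function.Injective m) :
    ∑ k, (m k) ^ L * ∏ j ∈ univ.erase k, (m k - m j)⁻¹ = ∑ k, m k := by
  classical
  have hinj : Set.InjOn m (univ : Finset (Fin L)) := fun a _ b _ h => hdist h
  set P : Polynomial ℝ := Polynomial.X ^ L - Lagrange.nodal univ m with hP
  have hcard : #(univ : Finset (Fin L)) = L := by simp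
  have hdegnodal : (Lagrange.nodal (univ : Finset (Fin L)) m).degree = L := by
    rw [Lagrange.degree_nodal, hcard]
  have hdegP : P.degree < (#(univ : Finset (Fin L)) : WithBot ℕ) := by
    have h := Polynomial.degree_sub_lt (p := (Polynomial.X : Polynomial ℝ) ^ L)
      (q := Lagrange.nodal univ m)
      (by rw [Polynomial.degree_X_pow, hdegnodal])
      (pow_ne_zero L Polynomial.X_ne_zero)
      (by rw [Polynomial.leadingCoeff_X_pow, (Lagrange.nodal_monic).leadingCoeff])
    rw [Polynomial.degree_X_pow] at h
    rw [hcard]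
    exact h
  have hPint : P = Lagrange.interpolate univ m (fun k => m k ^ L) := by
    apply Lagrange.eq_interpolate_of_eval_eq _ hinj hdegP
    intro i _
    simp [hP, Lagrange.eval_nodal_at_node (mem_univ i)]
  -- take the coefficient at L - 1 on both sides
  have hcoeffP : P.coeff (L - 1) = ∑ k, m k := by
    rw [hP, Polynomial.coeff_sub, Polynomial.coeff_X_pow,
      if_neg (by omega : ¬ L - 1 = L)]
    have hnodal : Lagrange.nodal (univ : Finset (Fin L)) m
        = ∏ i, (Polynomial.X - Polynomial.C (m i)) := Lagrange.nodal_eq _ _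
    have hnext : (Lagrange.nodal (univ : Finset (Fin L)) m).nextCoeff = -∑ i, m i := by
      rw [hnodal, Polynomial.prod_X_sub_C_nextCoeff]
    have hnatdeg : (Lagrange.nodal (univ : Finset (Fin L)) m).natDegree = L := by
      rw [Lagrange.natDegree_nodal, hcard]
    rw [Polynomial.nextCoeff, hnatdeg, if_neg (by omega : ¬ L = 0)] at hnext
    rw [hnext]
    ring
  have hcoeffI : (Lagrange.interpolate (univ : Finset (Fin L)) m (fun k => m k ^ L)).coeff (L - 1)
      = ∑ k, (m k) ^ L * ∏ j ∈ univ.erase k, (m k - m j)⁻¹ := by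
    rw [Lagrange.interpolate_apply, Polynomial.finset_sum_coeff]
    refine Finset.sum_congr rfl (fun k _ => ?_)
    rw [Polynomial.coeff_C_mul]
    congr 1
    have hbasis : Lagrange.basis univ m k
        = Polynomial.C (Lagrange.nodalWeight univ m k) * Lagrange.nodal (univ.erase k) m := by
      rw [Lagrange.basis_eq_prod_sub_inv_mul_nodal_div (mem_univ k),
        Lagrange.nodal_erase_eq_nodal_div (mem_univ k)]
    rw [hbasis, Polynomial.coeff_C_mul]
    have hdeg : (Lagrange.nodal ((univ : Finset (Fin L)).erase k) m).natDegree = L - 1 := by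
      rw [Lagrange.natDegree_nodal, card_erase_of_mem (mem_univ k), hcard]
    have hmono := (Lagrange.nodal_monic
      (s := (univ : Finset (Fin L)).erase k) (v := m)).coeff_natDegree
    rw [hdeg] at hmono
    rw [hmono, mul_one, Lagrange.nodalWeight]
  rw [hPint, hcoeffI] at hcoeffP
  rw [hcoeffP]

end Aux

/-- The expectation of the sum of `L` independent exponential random variables with
pairwise distinct means `m k` equals
`Σ_k (Π_{j ≠ k} m k / (m k − m j)) · m k`. -/
theorem expectation_sum_indep_exponentials
    {Ω : Type*} [MeasureSpace Ω] [IsProbabilityMeasure (ℙ : Measure Ω)]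
    {L : ℕ} (hL : 1 ≤ L) (m : Fin L → ℝ) (hm : ∀ k, 0 < m k)
    (hdist : Function.Injective m)
    (Z : Fin L → Ω → ℝ) (hmeas : ∀ k, Measurable (Z k))
    (hindep : iIndepFun Z ℙ)
    (hlaw : ∀ k, Measure.map (Z k) ℙ = expMeasure (m k)⁻¹) :
    ∫ ω, (∑ k, Z k ω) ∂ℙ
      = ∑ k, (∏ j ∈ univ.erase k, m k / (m k - m j)) * m k := by
  have hrk : ∀ k, (0:ℝ) < (m k)⁻¹ := fun k => inv_pos.mpr (hm k)
  have hint : ∀ k, Integrable (Z k) ℙ := by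
    intro k
    have h1 : Integrable (fun x : ℝ => x) (Measure.map (Z k) ℙ) := by
      rw [hlaw k]; exact exp_integrable (hrk k)
    exact (integrable_map_measure aestronglyMeasurable_id
      (hmeas k).aemeasurable).mp h1
  have hE : ∀ k, ∫ ω, Z k ω ∂ℙ = m k := by
    intro k
    have h1 : ∫ ω, Z k ω ∂ℙ = ∫ x, x ∂(Measure.map (Z k) ℙ) :=
      (integral_map (hmeas k).aemeasurable aestronglyMeasurable_id).symm
    rw [h1, hlaw k, exp_mean (hrk k), inv_inv]
  rw [integral_finset_sum _ (fun k _ => hint k)]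
  have hsum : ∑ k, ∫ ω, Z k ω ∂ℙ = ∑ k, m k := Finset.sum_congr rfl (fun k _ => hE k)
  rw [hsum, ← sum_pow_mul_nodalWeight hL m hdist]
  refine Finset.sum_congr rfl (fun k _ => ?_)
  have hpow : m k ^ (L - 1) * m k = m k ^ L := by
    rw [← pow_succ]
    congr 1
    omega
  rw [Finset.prod_div_distrib, Finset.prod_const,
    card_erase_of_mem (mem_univ k), card_univ, Fintype.card_fin,
    div_eq_mul_inv, ← Finset.prod_inv_distrib, mul_right_comm, hpow]
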